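/- The intersection initial segment solution R^IIS satisfies none of concatenation consistency (CCON), top-aligned consistency (TCON), and bottom-aligned consistency (BCON). -/

import Mathlib

namespace SocRank

/-- A coalitional ranking (a weak order on a set of feasible nonempty coalitions),
represented by its list of equivalence classes, listed from best to worst. -/
structure CoalRanking (X : Type*) where
  classes : List (Finset (Finset X))
  class_nonempty : ∀ C ∈ classes, C.Nonempty
  coal_nonempty : ∀ C ∈ classes, ∀ S ∈ C, S.Nonempty
  classes_disjoint : classes.Pairwise Disjoint

namespace CoalRanking

variable {X : Type*}

/-- The coalition domain `𝒟(≿)` of a coalitional ranking. -/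
def domain [DecidableEq X] (r : CoalRanking X) : Finset (Finset X) :=
  r.classes.foldr (· ∪ ·) ∅

/-- The list of equivalence classes of the restriction of a ranking to a set `D`
of coalitions. -/
def restrictClasses [DecidableEq X] (r : CoalRanking X) (D : Finset (Finset X)) :
    List (Finset (Finset X)) :=
  (r.classes.map (· ∩ D)).filter (fun C => decide C.Nonempty)

/-- Merging two lists of equivalence classes by aligning them at the top. -/
def zipUnion [DecidableEq X] :
    List (Finset (Finset X)) → List (Finset (Finset X)) → List (Finset (Finset X))
  | [], M => M
  | L, [] => L
  | A :: L, B :: M => (A ∪ B) :: zipUnion L M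

/-- `r` is a sum of the disjoint rankings `r₁` and `r₂`: its domain is the union of
the two domains and its restriction to the domain of `rᵢ` is `rᵢ`. -/
def IsSum [DecidableEq X] (r r₁ r₂ : CoalRanking X) : Prop :=
  Disjoint r₁.domain r₂.domain ∧
  r.domain = r₁.domain ∪ r₂.domain ∧
  r.restrictClasses r₁.domain = r₁.classes ∧
  r.restrictClasses r₂.domain = r₂.classes

/-- `r` is the concatenation sum `r₁ · r₂` of the disjoint rankings `r₁` and `r₂`. -/
def IsConcatSum [DecidableEq X] (r r₁ r₂ : CoalRanking X) : Prop :=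
  Disjoint r₁.domain r₂.domain ∧ r.classes = r₁.classes ++ r₂.classes

/-- `r` is the top-aligned sum `r₁ ⊨ r₂` of the disjoint rankings `r₁` and `r₂`. -/
def IsTopAlignedSum [DecidableEq X] (r r₁ r₂ : CoalRanking X) : Prop :=
  Disjoint r₁.domain r₂.domain ∧ r.classes = zipUnion r₁.classes r₂.classes

/-- `r` is the bottom-aligned sum `r₁ ⫤ r₂` of the disjoint rankings `r₁` and `r₂`. -/
def IsBottomAlignedSum [DecidableEq X] (r r₁ r₂ : CoalRanking X) : Prop :=
  Disjoint r₁.domain r₂.domain ∧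
  r.classes = (zipUnion r₁.classes.reverse r₂.classes.reverse).reverse

/-- Renaming the individuals of a coalitional ranking by a permutation `σ` of `X`:
the ranking `≿^σ`. -/
def mapPerm [DecidableEq X] (σ : Equiv.Perm X) (r : CoalRanking X) : CoalRanking X where
  classes := r.classes.map (fun C => C.image (fun S => S.image σ))
  class_nonempty := by
    intro C hC
    simp only [List.mem_map] at hC
    obtain ⟨C₀, hC₀, rfl⟩ := hC
    exact (r.class_nonempty C₀ hC₀).image _
  coal_nonempty := by
    intro C hC S hS
    simp only [List.mem_map] at hC
    obtain ⟨C₀, hC₀, rfl⟩ := hC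
    simp only [Finset.mem_image] at hS
    obtain ⟨S₀, hS₀, rfl⟩ := hS
    exact (r.coal_nonempty C₀ hC₀ S₀ hS₀).image _
  classes_disjoint := by
    refine List.Pairwise.map _ (fun {A B} h => ?_) r.classes_disjoint
    exact (Finset.disjoint_image
      (Finset.image_injective σ.injective)).mpr h

/-- Renaming the coalitions of a coalitional ranking by a permutation `π` of the set of
coalitions (mapping nonempty sets to nonempty sets): the ranking `≿_π`. -/
def mapCoalPerm [DecidableEq X] (π : Equiv.Perm (Finset X))
    (hπ : ∀ S : Finset X, S.Nonempty → (π S).Nonempty) (r : CoalRanking X) :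
    CoalRanking X where
  classes := r.classes.map (fun C => C.image π)
  class_nonempty := by
    intro C hC
    simp only [List.mem_map] at hC
    obtain ⟨C₀, hC₀, rfl⟩ := hC
    exact (r.class_nonempty C₀ hC₀).image _
  coal_nonempty := by
    intro C hC S hS
    simp only [List.mem_map] at hC
    obtain ⟨C₀, hC₀, rfl⟩ := hC
    simp only [Finset.mem_image] at hS
    obtain ⟨S₀, hS₀, rfl⟩ := hS
    exact hπ S₀ (r.coal_nonempty C₀ hC₀ S₀ hS₀)
  classes_disjoint := by
    refine List.Pairwise.map _ (fun {A B} h => ?_) r.classes_disjoint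
    exact (Finset.disjoint_image π.injective).mpr h

end CoalRanking

open CoalRanking

variable {X : Type*}

/-- A social ranking solution: a map assigning to every coalitional ranking a binary
relation on the individuals. -/
abbrev SRSMap (X : Type*) := CoalRanking X → X → X → Prop

/-- The symmetric part `I` of the social ranking. -/
def Ind (R : SRSMap X) (r : CoalRanking X) (x y : X) : Prop := R r x y ∧ R r y x

/-- The asymmetric part `P` of the social ranking. -/
def Pref (R : SRSMap X) (r : CoalRanking X) (x y : X) : Prop := R r x y ∧ ¬ R r y x

/-- Conditions (1)-(4) of consistency for the triple `(r₁, r₂, r)`. -/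
def ConsistentAt (R : SRSMap X) (r₁ r₂ r : CoalRanking X) : Prop :=
  ∀ x y : X,
    (Ind R r₁ x y → Ind R r₂ x y → Ind R r x y) ∧
    (Ind R r₁ x y → Pref R r₂ x y → Pref R r x y) ∧
    (Pref R r₁ x y → Ind R r₂ x y → Pref R r x y) ∧
    (Pref R r₁ x y → Pref R r₂ x y → Pref R r x y)

/-- Consistency (CON). -/
def CON [DecidableEq X] (R : SRSMap X) : Prop :=
  ∀ r₁ r₂ r : CoalRanking X, IsSum r r₁ r₂ → ConsistentAt R r₁ r₂ r

/-- Concatenation consistency (CCON). -/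
def CCON [DecidableEq X] (R : SRSMap X) : Prop :=
  ∀ r₁ r₂ r : CoalRanking X, IsConcatSum r r₁ r₂ → ConsistentAt R r₁ r₂ r

/-- Top-aligned consistency (TCON). -/
def TCON [DecidableEq X] (R : SRSMap X) : Prop :=
  ∀ r₁ r₂ r : CoalRanking X, IsTopAlignedSum r r₁ r₂ → ConsistentAt R r₁ r₂ r

/-- Bottom-aligned consistency (BCON). -/
def BCON [DecidableEq X] (R : SRSMap X) : Prop :=
  ∀ r₁ r₂ r : CoalRanking X, IsBottomAlignedSum r r₁ r₂ → ConsistentAt R r₁ r₂ r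

/-- II-concatenation consistency. -/
def IICCON [DecidableEq X] (R : SRSMap X) : Prop :=
  ∀ r₁ r₂ r : CoalRanking X, IsConcatSum r r₁ r₂ →
    ∀ x y : X, Ind R r₁ x y → Ind R r₂ x y → Ind R r x y

/-- IP-concatenation consistency. -/
def IPCCON [DecidableEq X] (R : SRSMap X) : Prop :=
  ∀ r₁ r₂ r : CoalRanking X, IsConcatSum r r₁ r₂ →
    ∀ x y : X, Ind R r₁ x y → Pref R r₂ x y → Pref R r x y

/-- PI-concatenation consistency. -/
def PICCON [DecidableEq X] (R : SRSMap X) : Prop :=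
  ∀ r₁ r₂ r : CoalRanking X, IsConcatSum r r₁ r₂ →
    ∀ x y : X, Pref R r₁ x y → Ind R r₂ x y → Pref R r x y

/-- PP-concatenation consistency. -/
def PPCCON [DecidableEq X] (R : SRSMap X) : Prop :=
  ∀ r₁ r₂ r : CoalRanking X, IsConcatSum r r₁ r₂ →
    ∀ x y : X, Pref R r₁ x y → Pref R r₂ x y → Pref R r x y

/-- `x_k`: the number of coalitions of the class `C` containing `x`. -/
def cnt [DecidableEq X] (x : X) (C : Finset (Finset X)) : ℕ :=
  (C.filter (fun S => x ∈ S)).card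

/-- The vector `θ_≿(x) = (x₁, …, x_l)`. -/
def theta [DecidableEq X] (r : CoalRanking X) (x : X) : List ℕ :=
  r.classes.map (cnt x)

/-- `sign`: `1` on positive numbers, `0` otherwise. -/
def sgn (n : ℕ) : ℕ := if 0 < n then 1 else 0

/-- The vector `θ̇_≿(x) = (sign(x₁), …, sign(x_l))`. -/
def thetaDot [DecidableEq X] (r : CoalRanking X) (x : X) : List ℕ :=
  (theta r x).map sgn

/-- The lexicographic order `≥^L` on vectors (of equal length). -/
def lexGE : List ℕ → List ℕ → Prop
  | _, [] => True
  | [], _ :: _ => False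
  | a :: as, b :: bs => b < a ∨ (a = b ∧ lexGE as bs)

/-- The lexicographic excellence solution (lex-cel) `R^L`. -/
def lexcel [DecidableEq X] : SRSMap X := fun r x y => lexGE (theta r x) (theta r y)

/-- The sign lexicographic excellence solution (S lex-cel) `R^{SL}`. -/
def slexcel [DecidableEq X] : SRSMap X := fun r x y => lexGE (thetaDot r x) (thetaDot r y)

/-- The plurality solution `R^P`. -/
def plurality [DecidableEq X] : SRSMap X := fun r x y =>
  (theta r y).headD 0 ≤ (theta r x).headD 0

/-- The sign plurality solution `R^{SP}`. -/
def splurality [DecidableEq X] : SRSMap X := fun r x y =>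
  sgn ((theta r y).headD 0) ≤ sgn ((theta r x).headD 0)

/-- The anti-plurality solution `R^{AP}`. -/
def antiplurality [DecidableEq X] : SRSMap X := fun r x y =>
  (theta r x).getLastD 0 ≤ (theta r y).getLastD 0

/-- `e_≿(x)`: the largest `k` such that `x` belongs to every coalition of each of the
first `k` equivalence classes. -/
def eIIS [DecidableEq X] (r : CoalRanking X) (x : X) : ℕ :=
  (r.classes.takeWhile (fun C => decide (∀ S ∈ C, x ∈ S))).length

/-- The intersection initial segment solution (IIS) `R^{IIS}`. -/
def iis [DecidableEq X] : SRSMap X := fun r x y => eIIS r y ≤ eIIS r x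

/-- The index of the equivalence class a coalition belongs to. -/
def classIdx [DecidableEq X] (r : CoalRanking X) (S : Finset X) : ℕ :=
  r.classes.findIdx (fun C => decide (S ∈ C))

/-- `C_{xy}`: the number of CP comparisons in favour of `x` against `y`. -/
def cpCount [DecidableEq X] [Fintype X] (r : CoalRanking X) (x y : X) : ℕ :=
  ((Finset.univ : Finset (Finset X)).filter (fun S =>
    S.Nonempty ∧ x ∉ S ∧ y ∉ S ∧ insert x S ∈ r.domain ∧ insert y S ∈ r.domain ∧
    classIdx r (insert x S) < classIdx r (insert y S))).card

/-- The Ceteris Paribus majority solution `R^{CPM}`. -/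
def cpm [DecidableEq X] [Fintype X] : SRSMap X := fun r x y =>
  cpCount r y x ≤ cpCount r x y

/-- Neutrality (NT). -/
def NT [DecidableEq X] (R : SRSMap X) : Prop :=
  ∀ (σ : Equiv.Perm X) (r : CoalRanking X) (x y : X),
    R (r.mapPerm σ) (σ x) (σ y) ↔ R r x y

/-- Weak coalitional anonymity (WCA). -/
def WCA [DecidableEq X] (R : SRSMap X) : Prop :=
  ∀ (x y : X) (π : Equiv.Perm (Finset X))
    (hπ : ∀ S : Finset X, S.Nonempty → (π S).Nonempty),
    (∀ S : Finset X, x ∈ S → x ∈ π S) → (∀ S : Finset X, y ∈ S → y ∈ π S) →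
    ∀ r : CoalRanking X,
      (R (r.mapCoalPerm π hπ) x y ↔ R r x y) ∧ (R (r.mapCoalPerm π hπ) y x ↔ R r y x)

/-- The weak union very important person property (WUVIP). -/
def WUVIP (R : SRSMap X) : Prop :=
  ∀ (r : CoalRanking X) (A B : Finset (Finset X)), r.classes = [A, B] →
    ∀ x y : X, (∃ S ∈ A, x ∈ S) → (∀ S ∈ A, y ∉ S) → Pref R r x y

/-- All indifference all winners (AIAW). -/
def AIAW [DecidableEq X] (R : SRSMap X) : Prop :=
  ∀ r : CoalRanking X, r.classes.length ≤ 1 →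
    (∀ x y : X, (∃ S ∈ r.domain, x ∈ S) → (∃ S ∈ r.domain, y ∈ S) → Ind R r x y) ∧
    (∀ x z : X, (∃ S ∈ r.domain, x ∈ S) → (∀ S ∈ r.domain, z ∉ S) → Pref R r x z)

/-- Independence of the decomposition of the worst sets (IDWS). -/
def IDWS [DecidableEq X] (R : SRSMap X) : Prop :=
  ∀ (r r' : CoalRanking X) (L G : List (Finset (Finset X))) (W : Finset (Finset X)),
    L ≠ [] → r.classes = L ++ [W] → r'.classes = L ++ G →
    G.foldr (· ∪ ·) ∅ = W →
    ∀ x y : X, Pref R r x y → Pref R r' x y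

/-- Independence of the addition of the worst sets (IAWS). -/
def IAWS [DecidableEq X] (R : SRSMap X) : Prop :=
  ∀ (r r' : CoalRanking X) (G : Finset (Finset X)),
    r'.classes = r.classes ++ [G] → (∀ S ∈ G, S ∉ r.domain) →
    ∀ x y : X, Pref R r x y → Pref R r' x y

/-- Tops-only (TO). -/
def TO (R : SRSMap X) : Prop :=
  ∀ (r r' : CoalRanking X) (A : Finset (Finset X)),
    r.classes.head? = some A → r'.classes.head? = some A → R r = R r'

/-- The dual S lex-cel `R^{DSL}`. -/
def dslexcel [DecidableEq X] : SRSMap X := fun r x y =>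
  lexGE ((thetaDot r y).reverse) ((thetaDot r x).reverse)

/-- The inverse dual S lex-cel `R^{IDSL}`. -/
def idslexcel [DecidableEq X] : SRSMap X := fun r x y => dslexcel r y x

/-- The vector `θ̃_≿(x)` used by the S lex-cel with precedence on unanimity. -/
def tildeTheta [DecidableEq X] (r : CoalRanking X) (x : X) : List ℕ :=
  r.classes.map (fun C => if cnt x C = C.card then 2 else if 0 < cnt x C then 1 else 0)

/-- The S lex-cel with a particular precedence on unanimity `R^{SLUN}`. -/
def slun [DecidableEq X] : SRSMap X := fun r x y =>
  lexGE (tildeTheta r x) (tildeTheta r y)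

/-- The S sum score `Σ_k sign(x_k)`. -/
def ssum [DecidableEq X] (r : CoalRanking X) (x : X) : ℕ := (thetaDot r x).sum

/-- The S sum rule with tie-breaking by S lex-cel `R^{SSUM,SL}`. -/
def ssumSL [DecidableEq X] : SRSMap X := fun r x y =>
  ssum r y < ssum r x ∨ (ssum r x = ssum r y ∧ slexcel r x y)


section IISCounter

variable {X : Type*} [DecidableEq X]

/-- Single-class coalitional ranking with one coalition. -/
def single1 (S : Finset X) (hS : S.Nonempty) : CoalRanking X where
  classes := [{S}]
  class_nonempty := by simp
  coal_nonempty := by simpa using hS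
  classes_disjoint := by simp

/-- Two-class coalitional ranking with two singleton classes. -/
def two2 (S T : Finset X) (hS : S.Nonempty) (hT : T.Nonempty) (hST : S ≠ T) :
    CoalRanking X where
  classes := [{S}, {T}]
  class_nonempty := by simp
  coal_nonempty := by
    intro C hC R hR
    simp only [List.mem_cons, List.mem_singleton, List.not_mem_nil, or_false] at hC
    rcases hC with rfl | rfl <;> simp_all
  classes_disjoint := by
    simp [List.pairwise_cons, Finset.disjoint_singleton, hST]

lemma eIIS_single1_mem (S : Finset X) (hS : S.Nonempty) (x : X) (hx : x ∈ S) :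
    eIIS (single1 S hS) x = 1 := by
  simp [eIIS, single1, List.takeWhile, hx]

lemma eIIS_single1_not_mem (S : Finset X) (hS : S.Nonempty) (x : X) (hx : x ∉ S) :
    eIIS (single1 S hS) x = 0 := by
  simp [eIIS, single1, List.takeWhile, hx]

/-- Single-class coalitional ranking with two coalitions. -/
def pair1 (S T : Finset X) (hS : S.Nonempty) (hT : T.Nonempty) : CoalRanking X where
  classes := [{S, T}]
  class_nonempty := by simp
  coal_nonempty := by
    intro C hC R hR
    simp only [List.mem_cons, List.not_mem_nil, or_false] at hC
    subst hC
    simp only [Finset.mem_insert, Finset.mem_singleton] at hR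
    rcases hR with rfl | rfl <;> assumption
  classes_disjoint := by simp

end IISCounter

end SocRank

open SocRank

/-- IIS satisfies none of CCON, TCON and BCON. -/
theorem iis_not_ccon_not_tcon_not_bcon {X : Type*} [DecidableEq X] [Fintype X]
    (hX : 3 ≤ Fintype.card X) :
    ¬ CCON (iis : SRSMap X) ∧ ¬ TCON (iis : SRSMap X) ∧ ¬ BCON (iis : SRSMap X) := by
  obtain ⟨a, b, c, hab, hac, hbc⟩ := (Fintype.two_lt_card_iff (α := X)).mp (by omega)
  -- basic rankings
  have hane : ({a} : Finset X).Nonempty := Finset.singleton_nonempty a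
  have hcne : ({c} : Finset X).Nonempty := Finset.singleton_nonempty c
  have hacne : ({a} : Finset X) ≠ {c} := by simp [hac]
  set rA : CoalRanking X := single1 {a} hane with hrA
  set rC : CoalRanking X := single1 {c} hcne with hrC
  have eAa : eIIS rA a = 1 := eIIS_single1_mem _ _ _ (by simp)
  have eAb : eIIS rA b = 0 := eIIS_single1_not_mem _ _ _ (by simp [hab.symm])
  have eCa : eIIS rC a = 0 := eIIS_single1_not_mem _ _ _ (by simp [hac])
  have eCb : eIIS rC b = 0 := eIIS_single1_not_mem _ _ _ (by simp [hbc])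
  have hIndC : Ind (iis : SRSMap X) rC a b := by
    constructor <;> simp [iis, eCa, eCb]
  have hPrefA : Pref (iis : SRSMap X) rA a b := by
    constructor <;> simp [iis, eAa, eAb]
  have hdisj : Disjoint rC.domain rA.domain := by
    simp [CoalRanking.domain, hrA, hrC, single1, Finset.disjoint_singleton,
      hacne.symm, hac]
  have hdisj' : Disjoint rA.domain rC.domain := hdisj.symm
  refine ⟨?_, ?_, ?_⟩
  · -- CCON fails: rC · rA
    intro h
    set r : CoalRanking X := two2 {c} {a} hcne hane hacne.symm with hr
    have hsum : CoalRanking.IsConcatSum r rC rA := ⟨hdisj, by simp [hr, two2, hrA, hrC, single1]⟩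
    have := ((h rC rA r hsum a b).2.1 hIndC hPrefA).2
    apply this
    have era : eIIS r a = 0 := by
      simp [eIIS, hr, two2, List.takeWhile, hac]
    have erb : eIIS r b = 0 := by
      simp [eIIS, hr, two2, List.takeWhile, hbc]
    simp [iis, era, erb]
  · -- TCON fails: rA ⊨ rC
    intro h
    set r : CoalRanking X := pair1 ({a} : Finset X) {c} hane hcne with hr
    have hcl : r.classes = CoalRanking.zipUnion rA.classes rC.classes := by
      simp [hr, pair1, single1, hrA, hrC, CoalRanking.zipUnion]
    have hsum : CoalRanking.IsTopAlignedSum r rA rC := ⟨hdisj', hcl⟩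
    have := ((h rA rC r hsum a b).2.2.1 hPrefA hIndC).2
    apply this
    have era : eIIS r a = 0 := by
      have hna : ¬ (∀ S ∈ ({({a} : Finset X), {c}} : Finset (Finset X)), a ∈ S) := by
        intro hh
        have h2 := hh {c} (by simp)
        simp [hac] at h2
      simp [eIIS, hr, pair1, List.takeWhile, hna, hac, hab.symm, hbc]
    have erb : eIIS r b = 0 := by
      have hnb : ¬ (∀ S ∈ ({({a} : Finset X), {c}} : Finset (Finset X)), b ∈ S) := by
        intro hh
        have h2 := hh {c} (by simp)
        simp [hbc] at h2
      simp [eIIS, hr, pair1, List.takeWhile, hnb, hac, hab.symm, hbc]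
    simp [iis, era, erb]
  · -- BCON fails: rA ⫤ rC
    intro h
    set r : CoalRanking X := pair1 ({a} : Finset X) {c} hane hcne with hr
    have hcl : r.classes =
        (CoalRanking.zipUnion rA.classes.reverse rC.classes.reverse).reverse := by
      simp [hr, pair1, single1, hrA, hrC, CoalRanking.zipUnion]
    have hsum : CoalRanking.IsBottomAlignedSum r rA rC := ⟨hdisj', hcl⟩
    have := ((h rA rC r hsum a b).2.2.1 hPrefA hIndC).2
    apply this
    have era : eIIS r a = 0 := by
      have hna : ¬ (∀ S ∈ ({({a} : Finset X), {c}} : Finset (Finset X)), a ∈ S) := by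
        intro hh
        have h2 := hh {c} (by simp)
        simp [hac] at h2
      simp [eIIS, hr, pair1, List.takeWhile, hna, hac, hab.symm, hbc]
    have erb : eIIS r b = 0 := by
      have hnb : ¬ (∀ S ∈ ({({a} : Finset X), {c}} : Finset (Finset X)), b ∈ S) := by
        intro hh
        have h2 := hh {c} (by simp)
        simp [hbc] at h2
      simp [eIIS, hr, pair1, List.takeWhile, hnb, hac, hab.symm, hbc]
    simp [iis, era, erb]
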